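/- Let N : ℕ → ℕ satisfy N(0) = 0, N(1) = 1, and for every t with 2^k ≤ t < 2^{k+1} (k ≥ 0), N(t) = 4·N(t − 2^k) + (2^{k+1} − t)^2. Then for t = Σ_{i=0}^{k} t_i 2^i (binary digits t_i), N(t) = Σ_{i=0}^{k} t_{k−i} · 4^{Σ_{j=0}^{i} t_{k−j+1}} · (2^{k−i+1} − t + Σ_{j=0}^{i} t_{k−j+1} 2^{k−j+1})^2, where t_m = 0 for m > k. -/

import Mathlib

private lemma dig_zero {t m : ℕ} (h : t < 2 ^ m) : t / 2 ^ m % 2 = 0 := by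
  rw [Nat.div_eq_of_lt h]

private lemma dig_low (s k m : ℕ) (hm : m ≤ k) :
    (s + 2 ^ (k + 1)) / 2 ^ m % 2 = s / 2 ^ m % 2 := by
  have h2 : (2 : ℕ) ^ (k + 1) = 2 ^ (k - m) * 2 * 2 ^ m := by
    rw [← pow_succ, ← pow_add]
    congr 1
    omega
  rw [h2, Nat.add_mul_div_right _ _ (by positivity),
    Nat.add_mul_mod_self_right]

private lemma dig_top {s k : ℕ} (hs : s < 2 ^ (k + 1)) :
    (s + 2 ^ (k + 1)) / 2 ^ (k + 1) % 2 = 1 := by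
  rw [Nat.add_div_right _ (by positivity), Nat.div_eq_of_lt hs]

theorem num_a_closed_form (N : ℕ → ℕ)
    (h0 : N 0 = 0) (h1 : N 1 = 1)
    (hrec : ∀ k t : ℕ, 2 ^ k ≤ t → t < 2 ^ (k + 1) →
      (N t : ℤ) = 4 * N (t - 2 ^ k) + ((2 : ℤ) ^ (k + 1) - t) ^ 2) :
    ∀ k t : ℕ, t < 2 ^ (k + 1) →
      (N t : ℤ) =
        ∑ i ∈ Finset.range (k + 1),
          ((t / 2 ^ (k - i) % 2 : ℕ) : ℤ) *
            4 ^ (∑ j ∈ Finset.range (i + 1), t / 2 ^ (k + 1 - j) % 2) *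
            ((2 : ℤ) ^ (k + 1 - i) - t +
              ∑ j ∈ Finset.range (i + 1),
                ((t / 2 ^ (k + 1 - j) % 2 : ℕ) : ℤ) * 2 ^ (k + 1 - j)) ^ 2 := by
  intro k
  induction k with
  | zero =>
    intro t ht
    interval_cases t <;> simp [h0, h1, Finset.sum_range_one]
  | succ k ih =>
    intro t ht
    rw [Finset.sum_range_succ']
    have ht2 : t < 2 ^ (k + 2) := ht
    have hdtop : t / 2 ^ (k + 2) % 2 = 0 := dig_zero ht2
    by_cases hlt : t < 2 ^ (k + 1)
    · -- leading digit is 0: the (k+1)-formula reduces to the k-formula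
      have hd1 : t / 2 ^ (k + 1) % 2 = 0 := dig_zero hlt
      rw [ih t hlt]
      have hz : ((t / 2 ^ (k + 1 - 0) % 2 : ℕ) : ℤ) *
          4 ^ (∑ j ∈ Finset.range (0 + 1), t / 2 ^ (k + 1 + 1 - j) % 2) *
          ((2 : ℤ) ^ (k + 1 + 1 - 0) - t +
            ∑ j ∈ Finset.range (0 + 1),
              ((t / 2 ^ (k + 1 + 1 - j) % 2 : ℕ) : ℤ) * 2 ^ (k + 1 + 1 - j)) ^ 2 = 0 := by
        simp [hd1]
      rw [hz, add_zero]
      refine Finset.sum_congr rfl ?_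
      intro i hi
      have e1 : ∑ j ∈ Finset.range (i + 1 + 1), t / 2 ^ (k + 1 + 1 - j) % 2
          = ∑ j ∈ Finset.range (i + 1), t / 2 ^ (k + 1 - j) % 2 := by
        rw [Finset.sum_range_succ']
        simp [Nat.add_sub_add_right, hdtop]
      have e2 : ∑ j ∈ Finset.range (i + 1 + 1),
            ((t / 2 ^ (k + 1 + 1 - j) % 2 : ℕ) : ℤ) * 2 ^ (k + 1 + 1 - j)
          = ∑ j ∈ Finset.range (i + 1),
            ((t / 2 ^ (k + 1 - j) % 2 : ℕ) : ℤ) * 2 ^ (k + 1 - j) := by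
        rw [Finset.sum_range_succ']
        simp [Nat.add_sub_add_right, hdtop]
      rw [e1, e2]
      congr 2 <;> simp [Nat.add_sub_add_right]
    · -- leading digit is 1: use the recurrence
      push_neg at hlt
      obtain ⟨s, rfl⟩ : ∃ s, t = s + 2 ^ (k + 1) := ⟨t - 2 ^ (k + 1), by omega⟩
      have hs : s < 2 ^ (k + 1) := by
        have : (2 : ℕ) ^ (k + 2) = 2 ^ (k + 1) + 2 ^ (k + 1) := by ring
        omega
      rw [hrec (k + 1) _ hlt ht, Nat.add_sub_cancel, ih s hs]
      have hA : (s + 2 ^ (k + 1)) / 2 ^ (k + 1) % 2 = 1 := dig_top hs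
      have hB : (s + 2 ^ (k + 1)) / 2 ^ (k + 2) % 2 = 0 := hdtop
      -- the i = 0 term equals the additive part of the recurrence
      have hB' : (s + 2 ^ (k + 1)) / 2 ^ (k + 1 + 1) % 2 = 0 := hB
      have hz : ((((s + 2 ^ (k + 1)) / 2 ^ (k + 1 - 0) % 2 : ℕ)) : ℤ) *
          4 ^ (∑ j ∈ Finset.range (0 + 1), (s + 2 ^ (k + 1)) / 2 ^ (k + 1 + 1 - j) % 2) *
          ((2 : ℤ) ^ (k + 1 + 1 - 0) - ((s + 2 ^ (k + 1) : ℕ) : ℤ) +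
            ∑ j ∈ Finset.range (0 + 1),
              (((s + 2 ^ (k + 1)) / 2 ^ (k + 1 + 1 - j) % 2 : ℕ) : ℤ) * 2 ^ (k + 1 + 1 - j)) ^ 2
          = ((2 : ℤ) ^ (k + 1 + 1) - ((s + 2 ^ (k + 1) : ℕ) : ℤ)) ^ 2 := by
        simp only [zero_add, Finset.sum_range_one, Nat.sub_zero]
        rw [hA, hB']
        norm_num
      rw [hz]
      congr 1
      rw [Finset.mul_sum]
      refine Finset.sum_congr rfl ?_
      intro i hi
      have hik : i ≤ k := by
        have := Finset.mem_range.mp hi; omega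
      have d1 : (s + 2 ^ (k + 1)) / 2 ^ (k + 1 - (i + 1)) % 2 = s / 2 ^ (k - i) % 2 := by
        rw [Nat.add_sub_add_right]
        exact dig_low s k (k - i) (by omega)
      have e1 : ∑ j ∈ Finset.range (i + 1 + 1), (s + 2 ^ (k + 1)) / 2 ^ (k + 1 + 1 - j) % 2
          = (∑ j ∈ Finset.range (i + 1), s / 2 ^ (k + 1 - j) % 2) + 1 := by
        rw [Finset.sum_range_succ', Finset.sum_range_succ', Finset.sum_range_succ']
        simp only [Nat.add_sub_add_right, Nat.sub_zero, hB, hA, Nat.add_zero]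
        have h0' : s / 2 ^ (k + 1) % 2 = 0 := dig_zero hs
        rw [h0', Nat.add_zero]
        congr 1
        refine Finset.sum_congr rfl ?_
        intro j hj
        exact dig_low s k (k - j) (by omega)
      have e2 : ∑ j ∈ Finset.range (i + 1 + 1),
            (((s + 2 ^ (k + 1)) / 2 ^ (k + 1 + 1 - j) % 2 : ℕ) : ℤ) * 2 ^ (k + 1 + 1 - j)
          = (∑ j ∈ Finset.range (i + 1),
              ((s / 2 ^ (k + 1 - j) % 2 : ℕ) : ℤ) * 2 ^ (k + 1 - j)) + 2 ^ (k + 1) := by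
        rw [Finset.sum_range_succ', Finset.sum_range_succ', Finset.sum_range_succ']
        simp only [Nat.add_sub_add_right, Nat.sub_zero, hB, hA, Nat.cast_zero, Nat.cast_one,
          zero_mul, one_mul, add_zero]
        have h0' : s / 2 ^ (k + 1) % 2 = 0 := dig_zero hs
        rw [h0']
        simp only [Nat.cast_zero, zero_mul, add_zero]
        congr 1
        refine Finset.sum_congr rfl ?_
        intro j hj
        rw [dig_low s k (k - j) (by omega)]
      rw [d1, e1, e2]
      have h4 : k + 1 + 1 - (i + 1) = k + 1 - i := by omega
      rw [h4]
      rw [pow_succ]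
      push_cast
      ring
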